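/- Assume k ∈ (0,1), δ, α > 0, u_H > u_L ≥ 0, (u_H+u_L)/2 > p ≥ 0, and k > k̲ := (1 + √(1 − (u_H−u_L)/(2(u_H−p))))/2. Then there exist 0 < λ̲ < λ̄ such that u_G(λ) = λ^{k−1}·((u_H−p) − (u_H−u_L)δ/(2δ+λ^k α)) is strictly increasing on (λ̲, λ̄) and strictly decreasing on (0, λ̲) and on (λ̄, ∞). -/

import Mathlib

open Real

lemma uG_hasDerivAt (k δ α A B x : ℝ) (hx : 0 < x) (hQ : 2 * δ + x ^ k * α ≠ 0) :
    HasDerivAt (fun lam : ℝ => lam ^ (k - 1) * (A - B * δ / (2 * δ + lam ^ k * α)))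
      ((k - 1) * x ^ (k - 1 - 1) * (A - B * δ / (2 * δ + x ^ k * α))
        + x ^ (k - 1) *
            (B * δ * (k * x ^ (k - 1) * α) / (2 * δ + x ^ k * α) ^ 2)) x := by
  have h2 : HasDerivAt (fun y : ℝ => y ^ k) (k * x ^ (k - 1)) x :=
    Real.hasDerivAt_rpow_const (Or.inl hx.ne')
  have h1 : HasDerivAt (fun y : ℝ => y ^ (k - 1)) ((k - 1) * x ^ (k - 1 - 1)) x :=
    Real.hasDerivAt_rpow_const (Or.inl hx.ne')
  have h3 : HasDerivAt (fun y : ℝ => 2 * δ + y ^ k * α) (k * x ^ (k - 1) * α) x :=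
    ((h2.mul_const α).const_add (2 * δ))
  have h4 : HasDerivAt (fun y : ℝ => B * δ / (2 * δ + y ^ k * α))
      (-(B * δ * (k * x ^ (k - 1) * α)) / (2 * δ + x ^ k * α) ^ 2) x := by
    have := (hasDerivAt_const x (B * δ)).div h3 hQ
    refine this.congr_deriv ?_
    ring
  have h5 : HasDerivAt (fun y : ℝ => A - B * δ / (2 * δ + y ^ k * α))
      (B * δ * (k * x ^ (k - 1) * α) / (2 * δ + x ^ k * α) ^ 2) x := by
    have := h4.const_sub A
    refine this.congr_deriv ?_
    ring
  have := h1.mul h5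
  exact this

lemma uG_deriv_eq (k δ α A B x : ℝ) (hx : 0 < x) (hQ : 0 < 2 * δ + x ^ k * α) :
    (k - 1) * x ^ (k - 1 - 1) * (A - B * δ / (2 * δ + x ^ k * α))
        + x ^ (k - 1) * (B * δ * (k * x ^ (k - 1) * α) / (2 * δ + x ^ k * α) ^ 2)
      = x ^ k * ((k - 1) * (A * (2 * δ + x ^ k * α) - B * δ) * (2 * δ + x ^ k * α)
          + B * δ * k * (x ^ k) * α) / (x ^ 2 * (2 * δ + x ^ k * α) ^ 2) := by
  have hrel : x ^ (k - 1) = x ^ k / x := by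
    rw [Real.rpow_sub hx, Real.rpow_one]
  have hrel2 : x ^ (k - 1 - 1) = x ^ k / x / x := by
    rw [Real.rpow_sub hx, Real.rpow_one, hrel]
  rw [hrel, hrel2]
  have hQ' := hQ.ne'
  have hx' := hx.ne'
  generalize 2 * δ + x ^ k * α = Q at hQ' ⊢
  generalize x ^ k = y
  field_simp

lemma quad_fact (a b c s ψ : ℝ) (ha : a ≠ 0) (hs : s ^ 2 = b ^ 2 - 4 * a * c) :
    a * ψ ^ 2 + b * ψ + c = a * (ψ - (b - s) / (-2 * a)) * (ψ - (b + s) / (-2 * a)) := by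
  field_simp
  ring_nf
  linear_combination hs

set_option maxHeartbeats 1000000 in
theorem uG_nonmonotone (k δ α uH uL p : ℝ)
    (hk : k ∈ Set.Ioo (0:ℝ) 1) (hδ : 0 < δ) (hα : 0 < α)
    (hu : uH > uL) (huL : uL ≥ 0) (hp : p ≥ 0) (hgain : (uH + uL) / 2 > p)
    (hkbig : k > (1 + Real.sqrt (1 - (uH - uL) / (2 * (uH - p)))) / 2) :
    ∃ lam₁ lam₂ : ℝ, 0 < lam₁ ∧ lam₁ < lam₂ ∧
      StrictMonoOn (fun lam : ℝ => lam ^ (k - 1) * (uH - p - (uH - uL) * δ / (2 * δ + lam ^ k * α)))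
        (Set.Ioo lam₁ lam₂) ∧
      StrictAntiOn (fun lam : ℝ => lam ^ (k - 1) * (uH - p - (uH - uL) * δ / (2 * δ + lam ^ k * α)))
        (Set.Ioo 0 lam₁) ∧
      StrictAntiOn (fun lam : ℝ => lam ^ (k - 1) * (uH - p - (uH - uL) * δ / (2 * δ + lam ^ k * α)))
        (Set.Ioi lam₂) := by
  obtain ⟨hk0, hk1⟩ := hk
  set A := uH - p with hAdef
  set B := uH - uL with hBdef
  have hApos : 0 < A := by simp only [hAdef]; linarith
  have hBpos : 0 < B := by simp only [hBdef]; linarith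
  have h2AB : B < 2 * A := by simp only [hAdef, hBdef]; linarith
  set s := Real.sqrt (1 - B / (2 * A)) with hsdef
  have harg : 0 ≤ 1 - B / (2 * A) := by
    have : B / (2 * A) < 1 := (div_lt_one (by linarith)).mpr h2AB
    linarith
  have hs0 : 0 ≤ s := Real.sqrt_nonneg _
  have hs2 : s ^ 2 = 1 - B / (2 * A) := Real.sq_sqrt harg
  have h2k : s < 2 * k - 1 := by linarith
  have hk_half : 1 / 2 < k := by linarith
  have hBdiv : B / (2 * A) * (2 * A) = B := div_mul_cancel₀ _ (by linarith)
  have hkey : 0 < 8 * A * k * (k - 1) + B := by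
    have h1 : s ^ 2 < (2 * k - 1) ^ 2 := by nlinarith
    rw [hs2] at h1
    nlinarith [mul_lt_mul_of_pos_right h1 (show (0:ℝ) < 2 * A by linarith)]
  have hbq : 0 < 4 * A * (k - 1) + B := by
    nlinarith [mul_nonneg (mul_nonneg hApos.le (by linarith : (0:ℝ) ≤ 1 - k))
      (by linarith : (0:ℝ) ≤ 2 * k - 1)]
  -- quadratic coefficients
  set a := (k - 1) * A * α ^ 2 with hadef
  set b := α * δ * (4 * A * (k - 1) + B) with hbdef
  set c := 2 * δ ^ 2 * (k - 1) * (2 * A - B) with hcdef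
  have ha_neg : a < 0 := by
    have : 0 < (1 - k) * A * α ^ 2 :=
      mul_pos (mul_pos (by linarith) hApos) (by positivity)
    simp only [hadef]; nlinarith
  have hb_pos : 0 < b := by
    simp only [hbdef]; exact mul_pos (by positivity) hbq
  have hc_neg : c < 0 := by
    have : 0 < 2 * δ ^ 2 * (1 - k) * (2 * A - B) := by
      apply mul_pos; apply mul_pos; positivity; linarith; linarith
    simp only [hcdef]; nlinarith
  have hg : ∀ ψ : ℝ, (k - 1) * (A * (2 * δ + ψ * α) - B * δ) * (2 * δ + ψ * α)
      + B * δ * k * ψ * α = a * ψ ^ 2 + b * ψ + c := by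
    intro ψ; simp only [hadef, hbdef, hcdef]; ring
  have hD : b ^ 2 - 4 * a * c = α ^ 2 * δ ^ 2 * B * (8 * A * k * (k - 1) + B) := by
    simp only [hadef, hbdef, hcdef]; ring
  have hDpos : 0 < b ^ 2 - 4 * a * c := by
    rw [hD]; exact mul_pos (by positivity) hkey
  set sD := Real.sqrt (b ^ 2 - 4 * a * c) with hsDdef
  have hsD2 : sD ^ 2 = b ^ 2 - 4 * a * c := Real.sq_sqrt hDpos.le
  have hsDpos : 0 < sD := Real.sqrt_pos.mpr hDpos
  have hac : 0 < a * c := mul_pos_of_neg_of_neg ha_neg hc_neg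
  clear_value a b c sD
  have hsD_lt_b : sD < b := by
    have h1 : sD ^ 2 < b ^ 2 := by nlinarith [hac]
    nlinarith [h1, hsDpos, hb_pos]
  set ψ₁ := (b - sD) / (-2 * a) with hψ₁def
  set ψ₂ := (b + sD) / (-2 * a) with hψ₂def
  have h2a : 0 < -2 * a := by linarith
  have hψ₁pos : 0 < ψ₁ := div_pos (by linarith) h2a
  have hψ₂pos : 0 < ψ₂ := div_pos (by linarith) h2a
  have hψ₁₂ : ψ₁ < ψ₂ := div_lt_div_of_pos_right (by linarith) h2a
  have hfact : ∀ ψ : ℝ, a * ψ ^ 2 + b * ψ + c = a * (ψ - ψ₁) * (ψ - ψ₂) :=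
    fun ψ => quad_fact a b c sD ψ ha_neg.ne hsD2
  -- the two critical points
  have hQpos : ∀ x : ℝ, 0 < x → 0 < 2 * δ + x ^ k * α := fun x hx => by
    have := Real.rpow_pos_of_pos hx k
    positivity
  have hderiv : ∀ x : ℝ, 0 < x →
      deriv (fun lam : ℝ => lam ^ (k - 1) * (A - B * δ / (2 * δ + lam ^ k * α))) x
        = x ^ k * (a * (x ^ k - ψ₁) * (x ^ k - ψ₂)) / (x ^ 2 * (2 * δ + x ^ k * α) ^ 2) := by
    intro x hx
    rw [(uG_hasDerivAt k δ α A B x hx (hQpos x hx).ne').deriv,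
      uG_deriv_eq k δ α A B x hx (hQpos x hx), hg (x ^ k), hfact (x ^ k)]
  have hcont : ∀ x : ℝ, 0 < x →
      ContinuousAt (fun lam : ℝ => lam ^ (k - 1) * (A - B * δ / (2 * δ + lam ^ k * α))) x :=
    fun x hx =>
      (uG_hasDerivAt k δ α A B x hx (hQpos x hx).ne').differentiableAt.continuousAt
  have hlamk : ∀ ψ : ℝ, 0 < ψ → (ψ ^ (1 / k)) ^ k = ψ := by
    intro ψ hψ
    rw [← Real.rpow_mul hψ.le, one_div_mul_cancel hk0.ne', Real.rpow_one]
  set lam₁ := ψ₁ ^ (1 / k) with hlam₁def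
  set lam₂ := ψ₂ ^ (1 / k) with hlam₂def
  have hlam₁pos : 0 < lam₁ := Real.rpow_pos_of_pos hψ₁pos _
  have hlam₂pos : 0 < lam₂ := Real.rpow_pos_of_pos hψ₂pos _
  have hlam₁k : lam₁ ^ k = ψ₁ := hlamk ψ₁ hψ₁pos
  have hlam₂k : lam₂ ^ k = ψ₂ := hlamk ψ₂ hψ₂pos
  refine ⟨lam₁, lam₂, hlam₁pos,
    Real.rpow_lt_rpow hψ₁pos.le hψ₁₂ (by positivity), ?_, ?_, ?_⟩
  · -- strictly increasing on (lam₁, lam₂)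
    apply strictMonoOn_of_deriv_pos (convex_Ioo _ _)
    · exact fun x hx => (hcont x (hlam₁pos.trans hx.1)).continuousWithinAt
    · intro x hx
      rw [interior_Ioo] at hx
      obtain ⟨hx1, hx2⟩ := hx
      have hxpos : 0 < x := hlam₁pos.trans hx1
      rw [hderiv x hxpos]
      have hgt : ψ₁ < x ^ k := by
        rw [← hlam₁k]; exact Real.rpow_lt_rpow hlam₁pos.le hx1 hk0
      have hlt : x ^ k < ψ₂ := by
        rw [← hlam₂k]; exact Real.rpow_lt_rpow hxpos.le hx2 hk0
      apply div_pos
      · apply mul_pos (Real.rpow_pos_of_pos hxpos _)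
        have h := mul_pos (mul_pos (neg_pos.mpr ha_neg) (sub_pos.mpr hgt))
          (sub_pos.mpr hlt)
        have heq : a * (x ^ k - ψ₁) * (x ^ k - ψ₂)
            = -a * (x ^ k - ψ₁) * (ψ₂ - x ^ k) := by ring
        rw [heq]; exact h
      · have := hQpos x hxpos
        positivity
  · -- strictly decreasing on (0, lam₁)
    apply strictAntiOn_of_deriv_neg (convex_Ioo _ _)
    · exact fun x hx => (hcont x hx.1).continuousWithinAt
    · intro x hx
      rw [interior_Ioo] at hx
      obtain ⟨hx1, hx2⟩ := hx
      rw [hderiv x hx1]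
      have hlt : x ^ k < ψ₁ := by
        rw [← hlam₁k]; exact Real.rpow_lt_rpow hx1.le hx2 hk0
      have hlt2 : x ^ k < ψ₂ := hlt.trans hψ₁₂
      apply div_neg_of_neg_of_pos
      · apply mul_neg_of_pos_of_neg (Real.rpow_pos_of_pos hx1 _)
        have h := mul_pos (mul_pos (neg_pos.mpr ha_neg) (sub_pos.mpr hlt))
          (sub_pos.mpr hlt2)
        have heq : a * (x ^ k - ψ₁) * (x ^ k - ψ₂)
            = -(-a * (ψ₁ - x ^ k) * (ψ₂ - x ^ k)) := by ring
        rw [heq]; linarith [h]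
      · have := hQpos x hx1
        positivity
  · -- strictly decreasing on (lam₂, ∞)
    apply strictAntiOn_of_deriv_neg (convex_Ioi _)
    · exact fun x hx => (hcont x (hlam₂pos.trans hx)).continuousWithinAt
    · intro x hx
      rw [interior_Ioi] at hx
      have hxpos : 0 < x := hlam₂pos.trans hx
      rw [hderiv x hxpos]
      have hgt : ψ₂ < x ^ k := by
        rw [← hlam₂k]; exact Real.rpow_lt_rpow hlam₂pos.le hx hk0
      have hgt1 : ψ₁ < x ^ k := hψ₁₂.trans hgt
      apply div_neg_of_neg_of_pos
      · apply mul_neg_of_pos_of_neg (Real.rpow_pos_of_pos hxpos _)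
        have h := mul_pos (mul_pos (neg_pos.mpr ha_neg) (sub_pos.mpr hgt1))
          (sub_pos.mpr hgt)
        have heq : a * (x ^ k - ψ₁) * (x ^ k - ψ₂)
            = -(-a * (x ^ k - ψ₁) * (x ^ k - ψ₂)) := by ring
        rw [heq]; linarith [h]
      · have := hQpos x hxpos
        positivity
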